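/- Let G = (V,E) be a tree, e = {u,v} ∈ E, and let G^u, G^v be the two components of G − e. Suppose x ∈ ℝ^L_{≥0} satisfies x(cov(f)) ≥ 1 for every f ∈ E. Define x^u by keeping x on links internal to G^u, zeroing links meeting G^v, and for each p ∈ V[G^u] increasing x^u_{pu} by Σ_{ℓ' ∈ cov(e), p ∈ ℓ'} x_{ℓ'}. Then x^u satisfies x^u(cov_{G^u}(f)) ≥ 1 for every edge f of G^u, where covering in G^u is with respect to tree paths in G^u. -/
import Mathlib


open SimpleGraph

/-- Edge set of the unique path between `u` and `v` in a tree. -/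
noncomputable def pathEdges {V : Type*} (G : SimpleGraph V) (hG : G.IsTree) (u v : V) :
    Set (Sym2 V) := {e | e ∈ ((hG.existsUnique_path u v).exists).choose.edges}

section Aux
variable {V : Type*} {G : SimpleGraph V}

lemma pathEdges_eq (hG : G.IsTree) {a b : V} (W : G.Walk a b) (hW : W.IsPath) :
    pathEdges G hG a b = {e | e ∈ W.edges} := by
  have h := hG.existsUnique_path a b
  have he : h.exists.choose = W := h.unique h.exists.choose_spec hW
  unfold pathEdges
  rw [he]

lemma pathEdges_symm (hG : G.IsTree) (a b : V) :
    pathEdges G hG a b = pathEdges G hG b a := by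
  obtain ⟨W, hW, -⟩ := hG.existsUnique_path b a
  rw [pathEdges_eq hG W.reverse hW.reverse, pathEdges_eq hG W hW]
  ext e
  simp [Walk.edges_reverse]

lemma pathEdges_self (hG : G.IsTree) (a : V) {e : Sym2 V}
    (he : e ∈ pathEdges G hG a a) : False := by
  rw [pathEdges_eq hG Walk.nil Walk.IsPath.nil] at he
  simp only [Set.mem_setOf_eq, Walk.edges_nil, List.not_mem_nil] at he

lemma edges_sub {s : Set (Sym2 V)} {a b : V} (w : (G.deleteEdges s).Walk a b) :
    ∀ e ∈ w.edges, e ∈ G.edgeSet := by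
  intro e he
  have h := w.edges_subset_edgeSet he
  rw [edgeSet_deleteEdges] at h
  exact h.1

lemma reach_of_mem_support {H : SimpleGraph V} {a b z : V} (w : H.Walk a b)
    (hz : z ∈ w.support) : H.Reachable a z := by
  classical
  exact ⟨w.takeUntil z hz⟩

lemma reach_or (hG : G.IsTree) (u v z : V) :
    (G.deleteEdges {s(u, v)}).Reachable u z ∨ (G.deleteEdges {s(u, v)}).Reachable v z := by
  have H : ∀ (a b : V) (w : G.Walk a b),
      ((G.deleteEdges {s(u, v)}).Reachable u b ∨ (G.deleteEdges {s(u, v)}).Reachable v b) →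
      ((G.deleteEdges {s(u, v)}).Reachable u a ∨ (G.deleteEdges {s(u, v)}).Reachable v a) := by
    intro a b w
    induction w with
    | nil => exact id
    | @cons a c b h w ih =>
      intro hb
      by_cases hec : s(a, c) = s(u, v)
      · rw [Sym2.eq_iff] at hec
        rcases hec with ⟨rfl, rfl⟩ | ⟨rfl, rfl⟩
        · exact Or.inl Reachable.rfl
        · exact Or.inr Reachable.rfl
      · have hadj : (G.deleteEdges {s(u, v)}).Adj a c := by
          rw [SimpleGraph.deleteEdges_adj]
          exact ⟨h, by simpa using hec⟩
        rcases ih hb with hc | hc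
        · exact Or.inl (hc.trans hadj.reachable.symm)
        · exact Or.inr (hc.trans hadj.reachable.symm)
  obtain ⟨w⟩ := hG.isConnected.preconnected z u
  exact H z u w (Or.inl Reachable.rfl)

lemma v_not (hG : G.IsTree) {u v : V} (huv : G.Adj u v) :
    ¬ (G.deleteEdges {s(u, v)}).Reachable u v := by
  classical
  intro h
  obtain ⟨w0⟩ := h
  set w := w0.toPath with hw
  have hW : (w.1.transfer G (edges_sub w.1)).IsPath := w.2.transfer _
  have h2 : (Walk.cons huv Walk.nil).IsPath := by
    simp [Walk.isPath_def, huv.ne]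
  have heq := (hG.existsUnique_path u v).unique hW h2
  have hmem : s(u, v) ∈ (w.1.transfer G (edges_sub w.1)).edges := by
    rw [heq]; simp
  rw [Walk.edges_transfer] at hmem
  have h3 := w.1.edges_subset_edgeSet hmem
  rw [edgeSet_deleteEdges] at h3
  exact h3.2 rfl

lemma same_side (hG : G.IsTree) {s : Set (Sym2 V)} {c p q : V}
    (hp : (G.deleteEdges s).Reachable c p) (hq : (G.deleteEdges s).Reachable c q)
    {y z : V} (hin : s(y, z) ∈ pathEdges G hG p q) :
    (G.deleteEdges s).Reachable c y := by
  classical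
  obtain ⟨w0⟩ := hp.symm.trans hq
  set w := w0.toPath with hw
  have hW : (w.1.transfer G (edges_sub w.1)).IsPath := w.2.transfer _
  rw [pathEdges_eq hG _ hW] at hin
  have hin' : s(y, z) ∈ (w.1.transfer G (edges_sub w.1)).edges := hin
  have hy := Walk.fst_mem_support_of_mem_edges _ hin'
  rw [Walk.support_transfer] at hy
  exact hp.trans (reach_of_mem_support w.1 hy)

lemma crossB (hG : G.IsTree) {u v : V} (huv : G.Adj u v)
    (hnv : ¬ (G.deleteEdges {s(u, v)}).Reachable u v) {p q : V}
    (hp : (G.deleteEdges {s(u, v)}).Reachable u p)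
    (hq : (G.deleteEdges {s(u, v)}).Reachable v q) :
    s(u, v) ∈ pathEdges G hG p q ∧
      ∀ y z : V, (G.deleteEdges {s(u, v)}).Reachable u y →
        (G.deleteEdges {s(u, v)}).Reachable u z →
        s(y, z) ∈ pathEdges G hG p q → s(y, z) ∈ pathEdges G hG p u := by
  classical
  obtain ⟨w1'⟩ := hp.symm
  obtain ⟨w2'⟩ := hq
  set w1 := w1'.toPath with hw1
  set w2 := w2'.toPath with hw2
  set t1 : G.Walk p u := w1.1.transfer G (edges_sub w1.1) with ht1
  set t2 : G.Walk v q := w2.1.transfer G (edges_sub w2.1) with ht2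
  have hsupp1 : ∀ z' ∈ w1.1.support, (G.deleteEdges {s(u, v)}).Reachable u z' :=
    fun z' hz' => hp.trans (reach_of_mem_support w1.1 hz')
  have hsupp2 : ∀ z' ∈ w2.1.support, (G.deleteEdges {s(u, v)}).Reachable v z' :=
    fun z' hz' => reach_of_mem_support w2.1 hz'
  have hdisj : ∀ z' ∈ w1.1.support, z' ∉ w2.1.support :=
    fun z' h1 h2 => hnv ((hsupp1 z' h1).trans (hsupp2 z' h2).symm)
  set W : G.Walk p q := t1.append (Walk.cons huv t2) with hWdef
  have hW : W.IsPath := by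
    rw [Walk.isPath_def, hWdef, Walk.support_append, Walk.support_cons, List.tail_cons]
    rw [ht1, ht2, Walk.support_transfer, Walk.support_transfer]
    exact ((Walk.isPath_def _).mp w1.2).append ((Walk.isPath_def _).mp w2.2) hdisj
  have hPE := pathEdges_eq hG W hW
  have hmemW : ∀ e, e ∈ pathEdges G hG p q ↔
      (e ∈ t1.edges ∨ e = s(u, v) ∨ e ∈ t2.edges) := by
    intro e
    rw [hPE]
    show e ∈ W.edges ↔ _
    rw [hWdef, Walk.edges_append, Walk.edges_cons]
    simp
  have hPEpu := pathEdges_eq hG t1 (w1.2.transfer _)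
  constructor
  · exact (hmemW _).mpr (Or.inr (Or.inl rfl))
  · intro y z hy hz hin
    rcases (hmemW _).mp hin with h1 | h2 | h3
    · rw [hPEpu]; exact h1
    · rw [Sym2.eq_iff] at h2
      rcases h2 with ⟨rfl, rfl⟩ | ⟨rfl, rfl⟩
      · exact absurd hz hnv
      · exact absurd hy hnv
    · exfalso
      have hy2 : y ∈ t2.support := Walk.fst_mem_support_of_mem_edges _ h3
      rw [ht2, Walk.support_transfer] at hy2
      exact hnv (hy.trans (hsupp2 y hy2).symm)

end Aux

open Classical in
noncomputable def splitMap {V : Type*} (Gu : Set V) (u : V) (ℓ : V × V) : V × V :=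
  if ℓ.1 ∈ Gu ∧ ℓ.2 ∈ Gu ∧ ℓ.1 ≠ u ∧ ℓ.2 ≠ u then ℓ
  else if ℓ.1 ∈ Gu ∧ ℓ.1 ≠ u then (ℓ.1, u)
  else if ℓ.2 ∈ Gu ∧ ℓ.2 ≠ u then (ℓ.2, u)
  else (u, u)

open Classical in
/-- Splitting a fractional cut-LP solution along an edge `e = {u,v}` of the tree:
the split solution `x^u` (obtained by keeping links internal to `G^u`, zeroing links
meeting `G^v`, and moving the mass of each link `ℓ'` covering `e` with endpoint
`p ∈ G^u` to the shadow link `pu`) still satisfies all cut constraints of `G^u`. -/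
theorem stmt16 {V : Type*} [Fintype V] (G : SimpleGraph V) (hG : G.IsTree)
    (u v : V) (huv : G.Adj u v)
    (Gu : Set V) (hGu : Gu = {z | (G.deleteEdges {s(u, v)}).Reachable u z})
    (x : V × V → ℝ) (hx : ∀ ℓ, 0 ≤ x ℓ)
    (hfeas : ∀ f ∈ G.edgeSet, 1 ≤ ∑ ℓ : V × V, if f ∈ pathEdges G hG ℓ.1 ℓ.2 then x ℓ else 0)
    (xu : V × V → ℝ)
    (hxu : ∀ p q : V, xu (p, q) =
      if p ∈ Gu ∧ q ∈ Gu ∧ p ≠ u ∧ q ≠ u then x (p, q)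
      else if p ∈ Gu ∧ p ≠ u ∧ q = u then
        x (p, u) + x (u, p) +
          ∑ ℓ' : V × V, if s(u, v) ∈ pathEdges G hG ℓ'.1 ℓ'.2 ∧ (ℓ'.1 = p ∨ ℓ'.2 = p)
            then x ℓ' else 0
      else 0) :
    ∀ f ∈ G.edgeSet, (∀ a ∈ f, a ∈ Gu) →
      1 ≤ ∑ ℓ : V × V, if f ∈ pathEdges G hG ℓ.1 ℓ.2 then xu ℓ else 0 := by
  classical
  have hGu' : ∀ w : V, w ∈ Gu ↔ (G.deleteEdges {s(u, v)}).Reachable u w := by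
    intro w; rw [hGu]; exact Iff.rfl
  have hnv : ¬ (G.deleteEdges {s(u, v)}).Reachable u v := v_not hG huv
  have hcov := reach_or hG u v
  have hxu0 : ∀ ℓ : V × V, 0 ≤ xu ℓ := by
    rintro ⟨p, q⟩
    rw [hxu]
    split_ifs with h1 h2
    · exact hx _
    · refine add_nonneg (add_nonneg (hx _) (hx _)) (Finset.sum_nonneg fun i _ => ?_)
      split_ifs
      · exact hx _
      · exact le_rfl
    · exact le_rfl
  intro f
  induction f using Sym2.ind with
  | _ y z =>
  intro hf hmem
  have hy : (G.deleteEdges {s(u, v)}).Reachable u y :=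
    (hGu' y).mp (hmem y (by simp))
  have hz : (G.deleteEdges {s(u, v)}).Reachable u z :=
    (hGu' z).mp (hmem z (by simp))
  have hchain : (1 : ℝ) ≤ ∑ ℓ : V × V,
      if s(y, z) ∈ pathEdges G hG ℓ.1 ℓ.2 then x ℓ else 0 := hfeas _ hf
  rw [← Finset.sum_fiberwise_of_maps_to (g := splitMap Gu u)
      (fun ℓ _ => Finset.mem_univ (splitMap Gu u ℓ))] at hchain
  refine le_trans hchain (Finset.sum_le_sum ?_)
  rintro ⟨a, b⟩ -
  by_cases hcase1 : a ∈ Gu ∧ b ∈ Gu ∧ a ≠ u ∧ b ≠ u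
  · -- fiber is contained in {(a,b)}
    have hsub : Finset.univ.filter (fun ℓ => splitMap Gu u ℓ = (a, b)) ⊆ {(a, b)} := by
      rintro ⟨p, q⟩ hl
      obtain ⟨-, hl⟩ := Finset.mem_filter.mp hl
      simp only [Finset.mem_singleton]
      unfold splitMap at hl
      split_ifs at hl with h1 h2 h3
      · exact hl
      · injection hl with e1 e2; exact absurd e2.symm hcase1.2.2.2
      · injection hl with e1 e2; exact absurd e2.symm hcase1.2.2.2
      · injection hl with e1 e2; exact absurd e1.symm hcase1.2.2.1
    refine le_trans (Finset.sum_le_sum_of_subset_of_nonneg hsub ?_) ?_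
    · intro i _ _
      split_ifs
      · exact hx _
      · exact le_rfl
    · rw [Finset.sum_singleton]
      have hx' : xu (a, b) = x (a, b) := by rw [hxu, if_pos hcase1]
      rw [hx']
  · by_cases hcase2 : b = u ∧ a ∈ Gu ∧ a ≠ u
    · obtain ⟨hb, ha, hau⟩ := hcase2
      rw [hb]
      have hra : (G.deleteEdges {s(u, v)}).Reachable u a := (hGu' a).mp ha
      have hmove : ∀ p q : V, splitMap Gu u (p, q) = (a, u) →
          s(y, z) ∈ pathEdges G hG p q → s(y, z) ∈ pathEdges G hG a u := by
        intro p q hl hsf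
        unfold splitMap at hl
        split_ifs at hl with h1 h2 h3
        · injection hl with e1 e2; exact absurd e2 h1.2.2.2
        · injection hl with e1 e2
          have e1' : p = a := e1
          rw [e1'] at h1 h2 hsf
          by_cases hqu : q = u
          · rw [hqu] at hsf; exact hsf
          · have hqn : ¬ (G.deleteEdges {s(u, v)}).Reachable u q := by
              intro hr
              exact h1 ⟨h2.1, (hGu' q).mpr hr, h2.2, hqu⟩
            have hqv := (hcov q).resolve_left hqn
            exact (crossB hG huv hnv hra hqv).2 y z hy hz hsf
        · injection hl with e1 e2
          have e1' : q = a := e1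
          rw [e1'] at h1 h3 hsf
          rw [pathEdges_symm hG p a] at hsf
          by_cases hpu : p = u
          · rw [hpu] at hsf
            rw [pathEdges_symm hG a u]
            rw [pathEdges_symm hG a u] at hsf
            exact hsf
          · have hpn : ¬ (G.deleteEdges {s(u, v)}).Reachable u p := by
              intro hr
              exact h2 ⟨(hGu' p).mpr hr, hpu⟩
            have hpv := (hcov p).resolve_left hpn
            exact (crossB hG huv hnv hra hpv).2 y z hy hz hsf
        · injection hl with e1 e2; exact absurd e1.symm hau
      by_cases hfP : s(y, z) ∈ pathEdges G hG a u
      · have hxuau : xu (a, u) = x (a, u) + x (u, a) +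
            ∑ ℓ' : V × V, (if s(u, v) ∈ pathEdges G hG ℓ'.1 ℓ'.2 ∧ (ℓ'.1 = a ∨ ℓ'.2 = a)
              then x ℓ' else 0) := by
          rw [hxu, if_neg (by simp), if_pos ⟨ha, hau, rfl⟩]
        have hg0 : ∀ ℓ : V × V, 0 ≤ (if ℓ = (a, u) then x (a, u) else 0) +
            (if ℓ = (u, a) then x (u, a) else 0) +
            (if s(u, v) ∈ pathEdges G hG ℓ.1 ℓ.2 ∧ (ℓ.1 = a ∨ ℓ.2 = a) then x ℓ else 0) := by
          intro ℓ
          refine add_nonneg (add_nonneg ?_ ?_) ?_ <;>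
            (split_ifs <;> first | exact hx _ | exact le_rfl)
        have hbound : ∀ ℓ ∈ Finset.univ.filter (fun ℓ => splitMap Gu u ℓ = (a, u)),
            (if s(y, z) ∈ pathEdges G hG ℓ.1 ℓ.2 then x ℓ else 0) ≤
            (if ℓ = (a, u) then x (a, u) else 0) +
            (if ℓ = (u, a) then x (u, a) else 0) +
            (if s(u, v) ∈ pathEdges G hG ℓ.1 ℓ.2 ∧ (ℓ.1 = a ∨ ℓ.2 = a) then x ℓ else 0) := by
          rintro ⟨p, q⟩ hl
          obtain ⟨-, hl⟩ := Finset.mem_filter.mp hl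
          by_cases hsf : s(y, z) ∈ pathEdges G hG p q
          swap
          · rw [if_neg hsf]; exact hg0 _
          unfold splitMap at hl
          split_ifs at hl with h1 h2 h3
          · injection hl with e1 e2; exact absurd e2 h1.2.2.2
          · injection hl with e1 e2
            have e1' : p = a := e1
            rw [e1'] at h1 h2 hsf ⊢
            by_cases hqu : q = u
            · rw [hqu] at hsf ⊢
              rw [if_pos hsf]
              have n1 : (if ((a, u) : V × V) = (a, u) then x (a, u) else 0) = x (a, u) :=
                if_pos rfl
              have n2 : 0 ≤ (if ((a, u) : V × V) = (u, a) then x (u, a) else 0) := by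
                split_ifs
                · exact hx _
                · exact le_rfl
              have n3 : 0 ≤ (if s(u, v) ∈ pathEdges G hG (a, u).1 (a, u).2 ∧
                  ((a, u).1 = a ∨ (a, u).2 = a) then x (a, u) else 0) := by
                split_ifs
                · exact hx _
                · exact le_rfl
              linarith
            · have hqn : ¬ (G.deleteEdges {s(u, v)}).Reachable u q := by
                intro hr
                exact h1 ⟨h2.1, (hGu' q).mpr hr, h2.2, hqu⟩
              have hqv := (hcov q).resolve_left hqn
              have hB1 := (crossB hG huv hnv hra hqv).1
              rw [if_pos hsf]
              rw [if_pos (show s(u, v) ∈ pathEdges G hG (a, q).1 (a, q).2 ∧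
                    ((a, q).1 = a ∨ (a, q).2 = a) from ⟨hB1, Or.inl rfl⟩)]
              have n1 : 0 ≤ (if ((a, q) : V × V) = (a, u) then x (a, u) else 0) := by
                split_ifs
                · exact hx _
                · exact le_rfl
              have n2 : 0 ≤ (if ((a, q) : V × V) = (u, a) then x (u, a) else 0) := by
                split_ifs
                · exact hx _
                · exact le_rfl
              linarith
          · injection hl with e1 e2
            have e1' : q = a := e1
            rw [e1'] at h1 h3 hsf ⊢
            by_cases hpu : p = u
            · rw [hpu] at hsf ⊢
              rw [if_pos hsf]
              have n1 : 0 ≤ (if ((u, a) : V × V) = (a, u) then x (a, u) else 0) := by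
                split_ifs
                · exact hx _
                · exact le_rfl
              have n2 : (if ((u, a) : V × V) = (u, a) then x (u, a) else 0) = x (u, a) :=
                if_pos rfl
              have n3 : 0 ≤ (if s(u, v) ∈ pathEdges G hG (u, a).1 (u, a).2 ∧
                  ((u, a).1 = a ∨ (u, a).2 = a) then x (u, a) else 0) := by
                split_ifs
                · exact hx _
                · exact le_rfl
              linarith
            · have hpn : ¬ (G.deleteEdges {s(u, v)}).Reachable u p := by
                intro hr
                exact h2 ⟨(hGu' p).mpr hr, hpu⟩
              have hpv := (hcov p).resolve_left hpn
              have hB1 := (crossB hG huv hnv hra hpv).1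
              rw [pathEdges_symm hG a p] at hB1
              rw [if_pos hsf]
              rw [if_pos (show s(u, v) ∈ pathEdges G hG (p, a).1 (p, a).2 ∧
                    ((p, a).1 = a ∨ (p, a).2 = a) from ⟨hB1, Or.inr rfl⟩)]
              have n1 : 0 ≤ (if ((p, a) : V × V) = (a, u) then x (a, u) else 0) := by
                split_ifs
                · exact hx _
                · exact le_rfl
              have n2 : 0 ≤ (if ((p, a) : V × V) = (u, a) then x (u, a) else 0) := by
                split_ifs
                · exact hx _
                · exact le_rfl
              linarith
          · injection hl with e1 e2; exact absurd e1.symm hau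
        have hfP' : s(y, z) ∈ pathEdges G hG (a, u).1 (a, u).2 := hfP
        rw [if_pos hfP']
        calc ∑ ℓ ∈ Finset.univ.filter (fun ℓ => splitMap Gu u ℓ = (a, u)),
              (if s(y, z) ∈ pathEdges G hG ℓ.1 ℓ.2 then x ℓ else 0)
            ≤ ∑ ℓ ∈ Finset.univ.filter (fun ℓ => splitMap Gu u ℓ = (a, u)),
              ((if ℓ = (a, u) then x (a, u) else 0) + (if ℓ = (u, a) then x (u, a) else 0) +
               (if s(u, v) ∈ pathEdges G hG ℓ.1 ℓ.2 ∧ (ℓ.1 = a ∨ ℓ.2 = a) then x ℓ else 0)) :=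
              Finset.sum_le_sum hbound
          _ ≤ ∑ ℓ : V × V,
              ((if ℓ = (a, u) then x (a, u) else 0) + (if ℓ = (u, a) then x (u, a) else 0) +
               (if s(u, v) ∈ pathEdges G hG ℓ.1 ℓ.2 ∧ (ℓ.1 = a ∨ ℓ.2 = a) then x ℓ else 0)) :=
              Finset.sum_le_sum_of_subset_of_nonneg (Finset.filter_subset _ _)
                (fun i _ _ => hg0 i)
          _ = x (a, u) + x (u, a) +
              ∑ ℓ' : V × V, (if s(u, v) ∈ pathEdges G hG ℓ'.1 ℓ'.2 ∧ (ℓ'.1 = a ∨ ℓ'.2 = a)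
                then x ℓ' else 0) := by
              rw [Finset.sum_add_distrib, Finset.sum_add_distrib]
              congr 2 <;> simp
          _ = xu (a, u) := hxuau.symm
      · have hfP' : ¬ s(y, z) ∈ pathEdges G hG (a, u).1 (a, u).2 := hfP
        rw [if_neg hfP']
        refine le_of_eq (Finset.sum_eq_zero ?_)
        rintro ⟨p, q⟩ hl
        obtain ⟨-, hl⟩ := Finset.mem_filter.mp hl
        rw [if_neg]
        intro hsf
        exact hfP (hmove p q hl hsf)
    · have hrhs : (0 : ℝ) ≤ if s(y, z) ∈ pathEdges G hG (a, b).1 (a, b).2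
          then xu (a, b) else 0 := by
        split_ifs
        · exact hxu0 _
        · exact le_rfl
      refine le_trans (le_of_eq (Finset.sum_eq_zero ?_)) hrhs
      rintro ⟨p, q⟩ hl
      obtain ⟨-, hl⟩ := Finset.mem_filter.mp hl
      unfold splitMap at hl
      split_ifs at hl with h1 h2 h3
      · injection hl with e1 e2
        rw [e1, e2] at h1
        exact absurd h1 hcase1
      · injection hl with e1 e2
        rw [e1] at h2
        exact absurd ⟨e2.symm, h2.1, h2.2⟩ hcase2
      · injection hl with e1 e2
        rw [e1] at h3
        exact absurd ⟨e2.symm, h3.1, h3.2⟩ hcase2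
      · rw [if_neg]
        intro hsf
        by_cases hpu : p = u
        · rw [hpu] at hsf
          by_cases hqu : q = u
          · rw [hqu] at hsf
            exact pathEdges_self hG u hsf
          · have hqn : ¬ (G.deleteEdges {s(u, v)}).Reachable u q := by
              intro hr; exact h3 ⟨(hGu' q).mpr hr, hqu⟩
            have hqv := (hcov q).resolve_left hqn
            exact pathEdges_self hG u
              ((crossB hG huv hnv Reachable.rfl hqv).2 y z hy hz hsf)
        · have hpn : ¬ (G.deleteEdges {s(u, v)}).Reachable u p := by
            intro hr; exact h2 ⟨(hGu' p).mpr hr, hpu⟩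
          have hpv := (hcov p).resolve_left hpn
          by_cases hqu : q = u
          · rw [hqu] at hsf
            rw [pathEdges_symm hG p u] at hsf
            exact pathEdges_self hG u
              ((crossB hG huv hnv Reachable.rfl hpv).2 y z hy hz hsf)
          · have hqn : ¬ (G.deleteEdges {s(u, v)}).Reachable u q := by
              intro hr; exact h3 ⟨(hGu' q).mpr hr, hqu⟩
            have hqv := (hcov q).resolve_left hqn
            exact hnv (hy.trans (same_side hG hpv hqv hsf).symm)
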